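/- arXiv:1207.3072 — 7 statements merged into one kernel-verified Lean document; each statement's English description precedes it below -/
import Mathlib

section
/- Let ⟨·,·⟩ be an ad-invariant inner product on a finite-dimensional real Lie algebra g and let (ξ, η, φ) be a normal almost contact metric structure on (g, ⟨·,·⟩) with fundamental 2-form F. Then the torsion 3-form of the associated Sasaki-with-torsion structure equals the negative of the Cartan 3-form: (η ∧ dη)(X,Y,Z) + dF(φX, φY, φZ) = −⟨[X,Y], Z⟩ for all X, Y, Z ∈ g. (This expresses that the unique almost contact metric connection with totally skew-symmetric torsion on the corresponding Lie group is the canonical flat connection.) -/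
/-- On a Lie algebra with ad-invariant inner product and a normal almost contact
metric structure, the torsion 3-form `η∧dη + d^φF` equals the negative of the
Cartan 3-form. -/
theorem stmt_1 (g : Type*) [LieRing g] [LieAlgebra ℝ g] [Module.Finite ℝ g]
    (B : g →ₗ[ℝ] g →ₗ[ℝ] ℝ)
    (hpos : ∀ X : g, X ≠ 0 → 0 < B X X) (hsymm : ∀ X Y : g, B X Y = B Y X)
    (hinv : ∀ X Y Z : g, B ⁅X, Y⁆ Z + B Y ⁅X, Z⁆ = 0)
    (ξ : g) (φ : g →ₗ[ℝ] g)
    (hξ : B ξ ξ = 1) (hφξ : φ ξ = 0)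
    (hφ2 : ∀ X : g, φ (φ X) = -X + (B ξ X) • ξ)
    (hφB : ∀ X Y : g, B (φ X) (φ Y) = B X Y - B ξ X * B ξ Y)
    (hnormal : ∀ X Y : g,
      ⁅φ X, φ Y⁆ + φ (φ ⁅X, Y⁆) - φ ⁅φ X, Y⁆ - φ ⁅X, φ Y⁆ - (B ξ ⁅X, Y⁆) • ξ = 0) :
    ∀ X Y Z : g,
      (B ξ X * -(B ξ ⁅Y, Z⁆) - B ξ Y * -(B ξ ⁅X, Z⁆) + B ξ Z * -(B ξ ⁅X, Y⁆))
        + (-(B (φ ⁅φ X, φ Y⁆) (φ Z)) + B (φ ⁅φ X, φ Z⁆) (φ Y) - B (φ ⁅φ Y, φ Z⁆) (φ X))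
      = -(B ⁅X, Y⁆ Z) := by
  -- η ∘ φ = 0
  have hηφ : ∀ W : g, B ξ (φ W) = 0 := by
    intro W
    have h1 : φ (φ (φ W)) = -φ W + (B ξ (φ W)) • ξ := hφ2 (φ W)
    have h2 : φ (φ (φ W)) = -φ W := by
      rw [hφ2 W, map_add, map_neg, map_smul, hφξ, smul_zero, add_zero]
    have h3 : (B ξ (φ W)) • ξ = 0 := by
      have h := h1.symm.trans h2
      exact add_eq_left.mp h
    have h4 := congrArg (B ξ) h3
    rw [map_smul, map_zero, smul_eq_mul, hξ, mul_one] at h4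
    exact h4
  -- φ is skew-adjoint with respect to B
  have hskew : ∀ W V : g, B (φ W) V = - B W (φ V) := by
    intro W V
    have h := hφB W (φ V)
    rw [hφ2 V, hηφ, mul_zero, sub_zero, map_add, map_neg, map_smul, smul_eq_mul,
      hsymm (φ W) ξ, hηφ, mul_zero, add_zero] at h
    linarith
  -- η([φX,φY]) = η([X,Y])
  have hηn : ∀ A C : g, B ξ ⁅φ A, φ C⁆ = B ξ ⁅A, C⁆ := by
    intro A C
    have h := congrArg (B ξ) (hnormal A C)
    simp only [map_add, map_sub, map_smul, smul_eq_mul, hηφ, hξ, mul_one, map_zero] at h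
    linarith
  -- bracket identity from normality: [φX,φY] = φ[φX,Y] + φ[X,φY] + [X,Y]
  have hbr : ∀ A C : g, (⁅φ A, φ C⁆ : g) = φ ⁅φ A, C⁆ + φ ⁅A, φ C⁆ + ⁅A, C⁆ := by
    intro A C
    have h := hnormal A C
    rw [hφ2 ⁅A, C⁆] at h
    have h' : ⁅φ A, φ C⁆ - (φ ⁅φ A, C⁆ + φ ⁅A, φ C⁆ + ⁅A, C⁆) = 0 := by
      rw [← h]; abel
    exact sub_eq_zero.mp h'
  intro X Y Z
  have h1 : B (φ ⁅φ X, Y⁆) Z = B ⁅φ X, φ Z⁆ Y := by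
    rw [hskew]
    have h := hinv (φ X) Y (φ Z)
    have hs := hsymm Y ⁅φ X, φ Z⁆
    linarith
  have h2 : B (φ ⁅X, φ Y⁆) Z = - B ⁅φ Y, φ Z⁆ X := by
    rw [hskew]
    have h := hinv (φ Y) X (φ Z)
    have hs := hsymm X ⁅φ Y, φ Z⁆
    have h'' : B ⁅X, φ Y⁆ (φ Z) = - B ⁅φ Y, X⁆ (φ Z) := by
      rw [← lie_skew X (φ Y), map_neg, LinearMap.neg_apply]
    linarith
  have ha : B ⁅φ X, φ Y⁆ Z = B ⁅X, Y⁆ Z + B ⁅φ X, φ Z⁆ Y - B ⁅φ Y, φ Z⁆ X := by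
    rw [hbr X Y, map_add, map_add, LinearMap.add_apply, LinearMap.add_apply, h1, h2]
    ring
  have e1 : B (φ ⁅φ X, φ Y⁆) (φ Z) = B ⁅φ X, φ Y⁆ Z - B ξ ⁅X, Y⁆ * B ξ Z := by
    rw [hφB, hηn]
  have e2 : B (φ ⁅φ X, φ Z⁆) (φ Y) = B ⁅φ X, φ Z⁆ Y - B ξ ⁅X, Z⁆ * B ξ Y := by
    rw [hφB, hηn]
  have e3 : B (φ ⁅φ Y, φ Z⁆) (φ X) = B ⁅φ Y, φ Z⁆ X - B ξ ⁅Y, Z⁆ * B ξ X := by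
    rw [hφB, hηn]
  linear_combination -e1 + e2 - e3 - ha
end

section
/- Let (ξ, η, φ) be an almost contact metric structure on the finite-dimensional real inner product space (V, ⟨·,·⟩). Let β be an alternating 2-form on V with ι_ξβ = 0 and β(φX, φY) = β(X, Y) for all X, Y (i.e. β is of type (1,1)), and let γ be an alternating 3-form on V with ι_ξγ = 0 satisfying γ(X,Y,Z) = γ(φX, φY, Z) + γ(φX, Y, φZ) + γ(X, φY, φZ) for all X, Y, Z (i.e. γ is of type (2,1)+(1,2)). Then the 3-form c := η∧β + γ(φ·, φ·, φ·) is of type (2,1)+(1,2): c(X,Y,Z) = c(φX, φY, Z) + c(φX, Y, φZ) + c(X, φY, φZ) for all X, Y, Z ∈ V. (This is the pointwise statement that the torsion 3-form c = η∧dη + d^φF of a Sasaki-with-torsion manifold is of type (2,1)+(1,2) with respect to φ.) -/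
open RealInnerProductSpace

/-- The torsion 3-form `c = η∧β + γ(φ·,φ·,φ·)` of an almost contact metric
structure, where `β` is a `(1,1)`-form and `γ` a `(2,1)+(1,2)`-form, both
horizontal. -/
noncomputable def torsion3 {V : Type*} [NormedAddCommGroup V] [InnerProductSpace ℝ V]
    (ξ : V) (φ : V →ₗ[ℝ] V) (β : V [⋀^Fin 2]→ₗ[ℝ] ℝ) (γ : V [⋀^Fin 3]→ₗ[ℝ] ℝ)
    (X Y Z : V) : ℝ :=
  ⟪ξ, X⟫ * β ![Y, Z] - ⟪ξ, Y⟫ * β ![X, Z] + ⟪ξ, Z⟫ * β ![X, Y] + γ ![φ X, φ Y, φ Z]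

/-- The torsion 3-form of a Sasaki-with-torsion structure is of type
`(2,1)+(1,2)` with respect to `φ` (pointwise statement). -/
theorem stmt_5 {V : Type*} [NormedAddCommGroup V] [InnerProductSpace ℝ V]
    [FiniteDimensional ℝ V]
    (ξ : V) (φ : V →ₗ[ℝ] V)
    (hξ : ⟪ξ, ξ⟫ = 1) (hφξ : φ ξ = 0)
    (hφ2 : ∀ X : V, φ (φ X) = -X + ⟪ξ, X⟫ • ξ)
    (hφg : ∀ X Y : V, ⟪φ X, φ Y⟫ = ⟪X, Y⟫ - ⟪ξ, X⟫ * ⟪ξ, Y⟫)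
    (β : V [⋀^Fin 2]→ₗ[ℝ] ℝ) (γ : V [⋀^Fin 3]→ₗ[ℝ] ℝ)
    (hβξ : ∀ Y : V, β ![ξ, Y] = 0)
    (hβ11 : ∀ X Y : V, β ![φ X, φ Y] = β ![X, Y])
    (hγξ : ∀ Y Z : V, γ ![ξ, Y, Z] = 0)
    (hγtype : ∀ X Y Z : V,
      γ ![X, Y, Z] = γ ![φ X, φ Y, Z] + γ ![φ X, Y, φ Z] + γ ![X, φ Y, φ Z]) :
    ∀ X Y Z : V,
      torsion3 ξ φ β γ X Y Z
        = torsion3 ξ φ β γ (φ X) (φ Y) Z + torsion3 ξ φ β γ (φ X) Y (φ Z)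
          + torsion3 ξ φ β γ X (φ Y) (φ Z) := by
  have hηφ : ∀ X : V, ⟪ξ, φ X⟫ = 0 := by
    intro X
    have h1 : φ (φ (φ X)) = -(φ X) + ⟪ξ, φ X⟫ • ξ := hφ2 (φ X)
    have h2 : φ (φ (φ X)) = -(φ X) := by
      rw [hφ2 X, map_add, map_neg, map_smul, hφξ, smul_zero, add_zero]
    have h3 : ⟪ξ, φ X⟫ • ξ = 0 := by
      have := h1.symm.trans h2
      linear_combination (norm := module) this
    have h4 := congrArg (fun v => ⟪ξ, v⟫) h3
    simp only [real_inner_smul_right, inner_zero_right, hξ, mul_one] at h4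
    exact h4
  intro X Y Z
  simp only [torsion3, hηφ, hβ11, zero_mul]
  rw [hγtype (φ X) (φ Y) (φ Z)]
  ring
end

section
/- Let (ξ, η, φ) be an almost contact metric structure on the n-dimensional real inner product space (V, ⟨·,·⟩). Let β be any alternating 2-form on V, let γ be an alternating 3-form on V with ι_ξγ = 0, and set c := η∧β + γ(φ·, φ·, φ·). Then for every orthonormal basis (e_1, …, e_n) of V and every X ∈ V: −½ Σ_{i=1}^{n} c(φ(X), e_i, φ(e_i)) = ½ Σ_{i=1}^{n} γ(X, e_i, φ(e_i)). In particular, the left-hand side does not depend on the choice of orthonormal basis. (This is the pointwise statement defining the Lee 1-form ϑ of a Sasaki-with-torsion manifold and proving the identity ϑ(X) = ½ Σ_i dF(X, E_i, φ(E_i)).) -/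
open RealInnerProductSpace

section aux
variable {V : Type*} [AddCommGroup V] [Module ℝ V]

private lemma upd2_1 (a b v : V) : Function.update ![a, b] 1 v = ![a, v] := by
  funext j; fin_cases j <;> simp

private lemma upd3_0 (a b c v : V) : Function.update ![a, b, c] 0 v = ![v, b, c] := by
  funext j; fin_cases j <;> simp

private lemma upd3_2 (a b c v : V) : Function.update ![a, b, c] 2 v = ![a, b, v] := by
  funext j; fin_cases j <;> simp

/-- linear map `v ↦ β ![a, v]`. -/
private def L2 (β : V [⋀^Fin 2]→ₗ[ℝ] ℝ) (a : V) : V →ₗ[ℝ] ℝ where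
  toFun v := β ![a, v]
  map_add' x y := by
    have := β.map_update_add ![a, 0] 1 x y
    rwa [upd2_1, upd2_1, upd2_1] at this
  map_smul' r x := by
    have := β.map_update_smul ![a, 0] 1 r x
    rwa [upd2_1, upd2_1] at this

private lemma g3_add0 (γ : V [⋀^Fin 3]→ₗ[ℝ] ℝ) (x y b c : V) :
    γ ![x + y, b, c] = γ ![x, b, c] + γ ![y, b, c] := by
  have := γ.map_update_add ![0, b, c] 0 x y
  rwa [upd3_0, upd3_0, upd3_0] at this

private lemma g3_smul0 (γ : V [⋀^Fin 3]→ₗ[ℝ] ℝ) (r : ℝ) (x b c : V) :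
    γ ![r • x, b, c] = r * γ ![x, b, c] := by
  have := γ.map_update_smul ![0, b, c] 0 r x
  rwa [upd3_0, upd3_0] at this

private lemma g3_add2 (γ : V [⋀^Fin 3]→ₗ[ℝ] ℝ) (a b x y : V) :
    γ ![a, b, x + y] = γ ![a, b, x] + γ ![a, b, y] := by
  have := γ.map_update_add ![a, b, 0] 2 x y
  rwa [upd3_2, upd3_2, upd3_2] at this

private lemma g3_smul2 (γ : V [⋀^Fin 3]→ₗ[ℝ] ℝ) (r : ℝ) (a b x : V) :
    γ ![a, b, r • x] = r * γ ![a, b, x] := by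
  have := γ.map_update_smul ![a, b, 0] 2 r x
  rwa [upd3_2, upd3_2] at this

private lemma g3_swap12 (γ : V [⋀^Fin 3]→ₗ[ℝ] ℝ) (a b c : V) :
    γ ![a, b, c] = -γ ![a, c, b] := by
  have h : (![a, c, b]) ∘ Equiv.swap 1 2 = ![a, b, c] := by
    funext j; fin_cases j <;> simp [Equiv.swap_apply_def]
  have := γ.map_swap (v := ![a, c, b]) (i := 1) (j := 2) (by decide)
  rw [h] at this; rw [this]

end aux

/-- Pointwise definition of the Lee 1-form of a Sasaki-with-torsion manifold:
`-½ Σᵢ c(φX, eᵢ, φeᵢ) = ½ Σᵢ γ(X, eᵢ, φeᵢ)` for every orthonormal basis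
`(e₁, …, eₙ)`; in particular, the left-hand side is basis independent. -/
theorem stmt_6 {V : Type*} [NormedAddCommGroup V] [InnerProductSpace ℝ V]
    [FiniteDimensional ℝ V]
    (ξ : V) (φ : V →ₗ[ℝ] V)
    (hξ : ⟪ξ, ξ⟫ = 1) (hφξ : φ ξ = 0)
    (hφ2 : ∀ X : V, φ (φ X) = -X + ⟪ξ, X⟫ • ξ)
    (hφg : ∀ X Y : V, ⟪φ X, φ Y⟫ = ⟪X, Y⟫ - ⟪ξ, X⟫ * ⟪ξ, Y⟫)
    (β : V [⋀^Fin 2]→ₗ[ℝ] ℝ) (γ : V [⋀^Fin 3]→ₗ[ℝ] ℝ)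
    (hγξ : ∀ Y Z : V, γ ![ξ, Y, Z] = 0)
    (n : ℕ) (hn : Module.finrank ℝ V = n) (e : OrthonormalBasis (Fin n) ℝ V) :
    ∀ X : V,
      -(1 / 2 : ℝ) * ∑ i, torsion3 ξ φ β γ (φ X) (e i) (φ (e i))
        = (1 / 2 : ℝ) * ∑ i, γ ![X, e i, φ (e i)] := by
  intro X
  -- η ∘ φ = 0
  have ηφ : ∀ Y : V, ⟪ξ, φ Y⟫ = 0 := by
    intro Y
    have h1 : φ (φ (φ Y)) = -(φ Y) + ⟪ξ, φ Y⟫ • ξ := hφ2 (φ Y)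
    have h2 : φ (φ (φ Y)) = -(φ Y) := by
      rw [hφ2 Y, map_add, map_neg, map_smul, hφξ, smul_zero, add_zero]
    rw [h2] at h1
    have h3 : ⟪ξ, φ Y⟫ • ξ = 0 := by
      have := h1.symm
      rwa [add_eq_left] at this
    have h4 : ⟪ξ, (⟪ξ, φ Y⟫ : ℝ) • ξ⟫ = (0 : ℝ) := by rw [h3, inner_zero_right]
    rwa [real_inner_smul_right, hξ, mul_one] at h4
  -- γ vanishes with ξ in slot 2
  have hγξ2 : ∀ a b : V, γ ![a, b, ξ] = 0 := by
    intro a b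
    rw [g3_swap12]
    have h : (![a, ξ, b]) ∘ Equiv.swap 0 1 = ![ξ, a, b] := by
      funext j; fin_cases j <;> simp [Equiv.swap_apply_def]
    have := γ.map_swap (v := ![a, ξ, b]) (i := 0) (j := 1) (by decide)
    rw [h, hγξ] at this
    have : γ ![a, ξ, b] = 0 := by linarith [this]
    rw [this, neg_zero]
  -- pointwise computation of torsion3
  have key : ∀ i, torsion3 ξ φ β γ (φ X) (e i) (φ (e i))
      = -(⟪ξ, e i⟫ * L2 β (φ X) (φ (e i))) - γ ![X, e i, φ (e i)] := by
    intro i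
    unfold torsion3
    rw [ηφ X, ηφ (e i)]
    have hγterm : γ ![φ (φ X), φ (e i), φ (φ (e i))] = -γ ![X, e i, φ (e i)] := by
      rw [hφ2 X, hφ2 (e i)]
      rw [g3_add0, g3_smul0, hγξ, mul_zero, add_zero]
      rw [g3_add2, g3_smul2, hγξ2, mul_zero, add_zero]
      have hx : (-X : V) = (-1 : ℝ) • X := by simp
      have hy : (-(e i) : V) = (-1 : ℝ) • (e i) := by simp
      rw [hx, hy, g3_smul0, g3_smul2]
      rw [g3_swap12 γ X (φ (e i)) (e i)]
      ring
    rw [hγterm]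
    have : L2 β (φ X) (φ (e i)) = β ![φ X, φ (e i)] := rfl
    rw [this]; ring
  rw [Finset.sum_congr rfl (fun i _ => key i)]
  rw [Finset.sum_sub_distrib, Finset.sum_neg_distrib]
  have hzero : ∑ i, ⟪ξ, e i⟫ * L2 β (φ X) (φ (e i)) = 0 := by
    have : ∀ i, ⟪ξ, e i⟫ * L2 β (φ X) (φ (e i)) = (L2 β (φ X) ∘ₗ φ) (⟪e i, ξ⟫ • e i) := by
      intro i
      rw [real_inner_comm]
      simp [LinearMap.comp_apply, map_smul, smul_eq_mul]
    rw [Finset.sum_congr rfl (fun i _ => this i), ← map_sum, e.sum_repr' ξ]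
    simp [LinearMap.comp_apply, hφξ]
  rw [hzero, neg_zero, zero_sub]
  ring
end

section
/- Let (ξ, η, φ) be an almost contact metric structure on the n-dimensional real inner product space (V, ⟨·,·⟩) with fundamental 2-form F. Then for every linear functional λ on V, every orthonormal basis (e_1, …, e_n) of V, and every X ∈ V: Σ_{i=1}^{n} (λ∧F)(X, e_i, φ(e_i)) = (n−3)·λ(X) + 2·η(X)·λ(ξ). (This contraction identity is the computational core of the transformation rule ϑ̃ = ϑ + (n−3)df for the Lee form under transversal conformal transformations, and of the 5-dimensional identity dF = ϑ∧F.) -/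
open RealInnerProductSpace

/-- Contraction identity `Σᵢ (λ∧F)(X, eᵢ, φeᵢ) = (n−3)λ(X) + 2η(X)λ(ξ)` for the
fundamental 2-form `F(X,Y) = ⟪φX, Y⟫` of an almost contact metric structure and
any orthonormal basis `(e₁, …, eₙ)`. -/
theorem stmt_7 {V : Type*} [NormedAddCommGroup V] [InnerProductSpace ℝ V]
    [FiniteDimensional ℝ V]
    (ξ : V) (φ : V →ₗ[ℝ] V)
    (hξ : ⟪ξ, ξ⟫ = 1) (hφξ : φ ξ = 0)
    (hφ2 : ∀ X : V, φ (φ X) = -X + ⟪ξ, X⟫ • ξ)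
    (hφg : ∀ X Y : V, ⟪φ X, φ Y⟫ = ⟪X, Y⟫ - ⟪ξ, X⟫ * ⟪ξ, Y⟫)
    (n : ℕ) (hn : Module.finrank ℝ V = n) (e : OrthonormalBasis (Fin n) ℝ V)
    (l : V →ₗ[ℝ] ℝ) (X : V) :
    ∑ i, (l X * ⟪φ (e i), φ (e i)⟫ - l (e i) * ⟪φ X, φ (e i)⟫
        + l (φ (e i)) * ⟪φ X, e i⟫)
      = ((n : ℝ) - 3) * l X + 2 * ⟪ξ, X⟫ * l ξ := by
  have key : ∀ v : V, ∑ i, ⟪v, e i⟫ * l (e i) = l v := by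
    intro v
    have h := e.sum_repr' v
    calc ∑ i, ⟪v, e i⟫ * l (e i) = l (∑ i, ⟪e i, v⟫ • e i) := by
          rw [map_sum]
          refine Finset.sum_congr rfl fun i _ => ?_
          rw [map_smul, real_inner_comm]; rfl
      _ = l v := by rw [h]
  have keyφ : ∑ i, l (φ (e i)) * ⟪φ X, e i⟫ = l (φ (φ X)) := by
    have h := e.sum_repr' (φ X)
    calc ∑ i, l (φ (e i)) * ⟪φ X, e i⟫ = l (φ (∑ i, ⟪e i, φ X⟫ • e i)) := by
          rw [map_sum, map_sum]
          refine Finset.sum_congr rfl fun i _ => ?_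
          rw [map_smul, map_smul, real_inner_comm]
          simp [mul_comm]
      _ = l (φ (φ X)) := by rw [h]
  have hsq : ∑ i, ⟪ξ, e i⟫ * ⟪ξ, e i⟫ = 1 := by
    have := e.sum_inner_mul_inner ξ ξ
    rw [hξ] at this
    rw [← this]
    exact Finset.sum_congr rfl fun i _ => by rw [real_inner_comm (e i) ξ]
  have hortho : ∀ i, ⟪e i, e i⟫ = (1 : ℝ) := fun i => real_inner_self_eq_norm_sq (e i) ▸ by
    simp [e.orthonormal.1 i]
  have s1 : ∑ i, l X * ⟪φ (e i), φ (e i)⟫ = l X * ((n : ℝ) - 1) := by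
    rw [← Finset.mul_sum]
    congr 1
    simp only [hφg, hortho]
    rw [Finset.sum_sub_distrib, hsq]
    simp
  have s2 : ∑ i, l (e i) * ⟪φ X, φ (e i)⟫ = l X - ⟪ξ, X⟫ * l ξ := by
    have : ∀ i, l (e i) * ⟪φ X, φ (e i)⟫
        = ⟪X, e i⟫ * l (e i) - ⟪ξ, X⟫ * (⟪ξ, e i⟫ * l (e i)) := by
      intro i; rw [hφg]; ring
    rw [Finset.sum_congr rfl fun i _ => this i, Finset.sum_sub_distrib,
      ← Finset.mul_sum, key X]
    congr 1
    have hxi : ∑ i, ⟪ξ, e i⟫ * l (e i) = l ξ := key ξ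
    rw [hxi]
  rw [Finset.sum_add_distrib, Finset.sum_sub_distrib, s1, s2, keyφ, hφ2]
  simp only [map_add, map_neg, map_smul, smul_eq_mul]
  ring
end

section
/- Let (ξ, η, φ) be an almost contact metric structure on a 5-dimensional real inner product space (V, ⟨·,·⟩) with fundamental 2-form F, and let γ be an alternating 3-form on V with ι_ξγ = 0. Then for every orthonormal basis (e_1, …, e_5) of V, the linear functional ϑ defined by ϑ(X) := ½ Σ_{i=1}^{5} γ(X, e_i, φ(e_i)) satisfies ϑ ∧ F = γ. (This is the pointwise form of the lemma that on a 5-dimensional Sasaki-with-torsion manifold dF = ϑ∧F, where ϑ is the Lee 1-form.) -/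
open RealInnerProductSpace

namespace Stmt8Aux

variable {V : Type*} [NormedAddCommGroup V] [InnerProductSpace ℝ V]

lemma upd0 {α : Type*} (x y z c : α) :
    Function.update ![x, y, z] (0 : Fin 3) c = ![c, y, z] := by
  funext i; fin_cases i <;> simp

lemma upd1 {α : Type*} (x y z c : α) :
    Function.update ![x, y, z] (1 : Fin 3) c = ![x, c, z] := by
  funext i; fin_cases i <;> simp

lemma upd2 {α : Type*} (x y z c : α) :
    Function.update ![x, y, z] (2 : Fin 3) c = ![x, y, c] := by
  funext i; fin_cases i <;> simp

variable (γ : V [⋀^Fin 3]→ₗ[ℝ] ℝ)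

lemma g_add0 (a b y z : V) : γ ![a + b, y, z] = γ ![a, y, z] + γ ![b, y, z] := by
  simpa [upd0] using γ.map_update_add ![a, y, z] 0 a b

lemma g_smul0 (c : ℝ) (a y z : V) : γ ![c • a, y, z] = c * γ ![a, y, z] := by
  simpa [upd0] using γ.map_update_smul ![a, y, z] 0 c a

lemma g_add1 (x a b z : V) : γ ![x, a + b, z] = γ ![x, a, z] + γ ![x, b, z] := by
  simpa [upd1] using γ.map_update_add ![x, a, z] 1 a b

lemma g_smul1 (c : ℝ) (x a z : V) : γ ![x, c • a, z] = c * γ ![x, a, z] := by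
  simpa [upd1] using γ.map_update_smul ![x, a, z] 1 c a

lemma g_add2 (x y a b : V) : γ ![x, y, a + b] = γ ![x, y, a] + γ ![x, y, b] := by
  simpa [upd2] using γ.map_update_add ![x, y, a] 2 a b

lemma g_smul2 (c : ℝ) (x y a : V) : γ ![x, y, c • a] = c * γ ![x, y, a] := by
  simpa [upd2] using γ.map_update_smul ![x, y, a] 2 c a

/-- slot-0 linear map -/
def sl0 (y z : V) : V →ₗ[ℝ] ℝ where
  toFun x := γ ![x, y, z]
  map_add' a b := g_add0 γ a b y z
  map_smul' c a := g_smul0 γ c a y z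

@[simp] lemma sl0_apply (y z x : V) : sl0 γ y z x = γ ![x, y, z] := rfl

/-- the bilinear map in slots 1,2 with slot 0 fixed -/
def bil (X : V) : V →ₗ[ℝ] V →ₗ[ℝ] ℝ :=
  LinearMap.mk₂ ℝ (fun a b => γ ![X, a, b])
    (fun a a' b => g_add1 γ X a a' b)
    (fun c a b => g_smul1 γ c X a b)
    (fun a b b' => g_add2 γ X a b b')
    (fun c a b => g_smul2 γ c X a b)

@[simp] lemma bil_apply (X a b : V) : bil γ X a b = γ ![X, a, b] := rfl

end Stmt8Aux

namespace Stmt8Aux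

variable {V : Type*} [NormedAddCommGroup V] [InnerProductSpace ℝ V]

/-- fundamental-form bilinear map -/
noncomputable def FL (φ : V →ₗ[ℝ] V) : V →ₗ[ℝ] V →ₗ[ℝ] ℝ :=
  LinearMap.mk₂ ℝ (fun X Y => ⟪φ X, Y⟫)
    (fun a a' b => by simp [map_add, inner_add_left])
    (fun c a b => by simp [map_smul, real_inner_smul_left])
    (fun a b b' => by simp [inner_add_right])
    (fun c a b => by simp [real_inner_smul_right])

@[simp] lemma FL_apply (φ : V →ₗ[ℝ] V) (X Y : V) : FL φ X Y = ⟪φ X, Y⟫ := rfl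

variable (γ : V [⋀^Fin 3]→ₗ[ℝ] ℝ) (φ : V →ₗ[ℝ] V) (u v : V)

/-- the Lee form as a linear map -/
noncomputable def theta : V →ₗ[ℝ] ℝ := sl0 γ u (φ u) + sl0 γ v (φ v)

@[simp] lemma theta_apply (X : V) :
    theta γ φ u v X = γ ![X, u, φ u] + γ ![X, v, φ v] := rfl

/-- the trilinear map `ϑ∧F - γ` -/
noncomputable def Tmap : V →ₗ[ℝ] V →ₗ[ℝ] V →ₗ[ℝ] ℝ :=
  LinearMap.mk₂ ℝ (fun X Y =>
      theta γ φ u v X • FL φ Y - theta γ φ u v Y • FL φ X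
        + FL φ X Y • theta γ φ u v - bil γ X Y)
    (fun a a' b => by
      ext Z
      simp [bil, LinearMap.mk₂_apply, g_add0, g_add1, map_add, inner_add_left]
      ring)
    (fun c a b => by
      ext Z
      simp [bil, LinearMap.mk₂_apply, g_smul0, g_smul1, map_smul,
        real_inner_smul_left, smul_eq_mul]
      ring)
    (fun a b b' => by
      ext Z
      simp [bil, LinearMap.mk₂_apply, g_add0, g_add1, g_add2, map_add,
        inner_add_left, inner_add_right]
      ring)
    (fun c a b => by
      ext Z
      simp [bil, LinearMap.mk₂_apply, g_smul0, g_smul1, g_smul2, map_smul,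
        real_inner_smul_left, real_inner_smul_right, smul_eq_mul]
      ring)

lemma Tmap_apply (X Y Z : V) :
    Tmap γ φ u v X Y Z
      = (γ ![X, u, φ u] + γ ![X, v, φ v]) * ⟪φ Y, Z⟫
        - (γ ![Y, u, φ u] + γ ![Y, v, φ v]) * ⟪φ X, Z⟫
        + (γ ![Z, u, φ u] + γ ![Z, v, φ v]) * ⟪φ X, Y⟫
        - γ ![X, Y, Z] := by
  simp [Tmap, LinearMap.mk₂_apply, smul_eq_mul]
  ring

end Stmt8Aux

open Stmt8Aux
set_option maxHeartbeats 4000000 in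
/-- In dimension 5, the Lee form `ϑ(X) = ½ Σᵢ γ(X, eᵢ, φeᵢ)` of a horizontal
3-form `γ` satisfies `ϑ ∧ F = γ`, where `F(X,Y) = ⟪φX, Y⟫` is the fundamental
2-form (pointwise form of `dF = ϑ∧F` on 5-dimensional ST manifolds). -/
theorem stmt_8 {V : Type*} [NormedAddCommGroup V] [InnerProductSpace ℝ V]
    [FiniteDimensional ℝ V] (hdim : Module.finrank ℝ V = 5)
    (ξ : V) (φ : V →ₗ[ℝ] V)
    (hξ : ⟪ξ, ξ⟫ = 1) (hφξ : φ ξ = 0)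
    (hφ2 : ∀ X : V, φ (φ X) = -X + ⟪ξ, X⟫ • ξ)
    (hφg : ∀ X Y : V, ⟪φ X, φ Y⟫ = ⟪X, Y⟫ - ⟪ξ, X⟫ * ⟪ξ, Y⟫)
    (γ : V [⋀^Fin 3]→ₗ[ℝ] ℝ)
    (hγξ : ∀ Y Z : V, γ ![ξ, Y, Z] = 0)
    (e : OrthonormalBasis (Fin 5) ℝ V) :
    ∀ X Y Z : V,
      ((1 / 2 : ℝ) * ∑ i, γ ![X, e i, φ (e i)]) * ⟪φ Y, Z⟫
        - ((1 / 2 : ℝ) * ∑ i, γ ![Y, e i, φ (e i)]) * ⟪φ X, Z⟫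
        + ((1 / 2 : ℝ) * ∑ i, γ ![Z, e i, φ (e i)]) * ⟪φ X, Y⟫
      = γ ![X, Y, Z] := by
  classical
  -- ## derived identities for the almost contact metric structure
  have hξφ : ∀ X : V, ⟪ξ, φ X⟫ = 0 := by
    intro X
    have h1 : ⟪φ (φ X), φ (φ X)⟫ = ⟪φ X, φ X⟫ - ⟪ξ, φ X⟫ * ⟪ξ, φ X⟫ := hφg _ _
    have h2 : ⟪φ X, φ X⟫ = ⟪X, X⟫ - ⟪ξ, X⟫ * ⟪ξ, X⟫ := hφg _ _
    rw [hφ2] at h1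
    have h3 : ⟪-X + ⟪ξ, X⟫ • ξ, -X + ⟪ξ, X⟫ • ξ⟫ = ⟪X, X⟫ - ⟪ξ, X⟫ * ⟪ξ, X⟫ := by
      simp [-inner_self_eq_norm_sq_to_K, inner_add_left, inner_add_right, inner_neg_left, inner_neg_right,
        real_inner_smul_left, real_inner_smul_right, hξ, real_inner_comm X ξ]
      ring
    have h4 : ⟪ξ, φ X⟫ * ⟪ξ, φ X⟫ = 0 := by rw [h3] at h1; linarith
    exact mul_self_eq_zero.mp h4
  have hφξ' : ∀ X : V, ⟪φ X, ξ⟫ = 0 := fun X => by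
    rw [real_inner_comm]; exact hξφ X
  have skew : ∀ X Y : V, ⟪φ X, Y⟫ = -⟪X, φ Y⟫ := by
    intro X Y
    have h1 : ⟪φ X, φ (φ Y)⟫ = ⟪X, φ Y⟫ - ⟪ξ, X⟫ * ⟪ξ, φ Y⟫ := hφg _ _
    rw [hξφ Y, hφ2 Y] at h1
    have h2 : ⟪φ X, -Y + ⟪ξ, Y⟫ • ξ⟫ = -⟪φ X, Y⟫ := by
      simp [inner_add_right, inner_neg_right, real_inner_smul_right, hφξ' X]
    rw [h2] at h1
    linarith
  -- ## construction of the adapted vectors u, v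
  have hξne : ξ ≠ 0 := by
    intro h; rw [h] at hξ; simp at hξ
  obtain ⟨u, hξu, hu⟩ : ∃ u : V, ⟪ξ, u⟫ = 0 ∧ ⟪u, u⟫ = 1 := by
    have h1 := Submodule.finrank_add_finrank_orthogonal (K := Submodule.span ℝ {ξ}) (𝕜 := ℝ)
    rw [finrank_span_singleton hξne, hdim] at h1
    have h2 : 0 < Module.finrank ℝ ((Submodule.span ℝ {ξ})ᗮ : Submodule ℝ V) := by omega
    have h3 : Nontrivial ((Submodule.span ℝ {ξ})ᗮ : Submodule ℝ V) :=
      Module.finrank_pos_iff.mp h2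
    obtain ⟨w, hw⟩ := exists_ne (0 : ((Submodule.span ℝ {ξ})ᗮ : Submodule ℝ V))
    have hwV : (w : V) ≠ 0 := fun h => hw (Subtype.ext h)
    have hξw : ⟪ξ, (w : V)⟫ = 0 := by
      have := w.2
      rw [Submodule.mem_orthogonal] at this
      exact this ξ (Submodule.mem_span_singleton_self ξ)
    refine ⟨‖(w : V)‖⁻¹ • (w : V), ?_, ?_⟩
    · rw [real_inner_smul_right, hξw, mul_zero]
    · rw [real_inner_smul_left, real_inner_smul_right, real_inner_self_eq_norm_mul_norm]
      have : ‖(w : V)‖ ≠ 0 := norm_ne_zero_iff.mpr hwV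
      field_simp
  obtain ⟨v, hξv, huv, hφuv, hv⟩ :
      ∃ v : V, ⟪ξ, v⟫ = 0 ∧ ⟪u, v⟫ = 0 ∧ ⟪φ u, v⟫ = 0 ∧ ⟪v, v⟫ = 1 := by
    set K : Submodule ℝ V := Submodule.span ℝ (Set.range ![ξ, u, φ u]) with hK
    have hcard : Module.finrank ℝ K ≤ 3 := by
      refine le_trans (finrank_span_le_card _) ?_
      rw [Set.toFinset_range]
      exact le_trans Finset.card_image_le (by simp)
    have h1 := Submodule.finrank_add_finrank_orthogonal (K := K) (𝕜 := ℝ)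
    rw [hdim] at h1
    have h2 : 0 < Module.finrank ℝ (Kᗮ : Submodule ℝ V) := by omega
    have h3 : Nontrivial (Kᗮ : Submodule ℝ V) := Module.finrank_pos_iff.mp h2
    obtain ⟨w, hw⟩ := exists_ne (0 : (Kᗮ : Submodule ℝ V))
    have hwV : (w : V) ≠ 0 := fun h => hw (Subtype.ext h)
    have hmem : ∀ x ∈ K, ⟪x, (w : V)⟫ = 0 := by
      have := w.2
      rw [Submodule.mem_orthogonal] at this
      exact this
    have hξw : ⟪ξ, (w : V)⟫ = 0 :=
      hmem ξ (Submodule.subset_span ⟨0, rfl⟩)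
    have huw : ⟪u, (w : V)⟫ = 0 :=
      hmem u (Submodule.subset_span ⟨1, rfl⟩)
    have hφuw : ⟪φ u, (w : V)⟫ = 0 :=
      hmem (φ u) (Submodule.subset_span ⟨2, rfl⟩)
    refine ⟨‖(w : V)‖⁻¹ • (w : V), ?_, ?_, ?_, ?_⟩
    · rw [real_inner_smul_right, hξw, mul_zero]
    · rw [real_inner_smul_right, huw, mul_zero]
    · rw [real_inner_smul_right, hφuw, mul_zero]
    · rw [real_inner_smul_left, real_inner_smul_right, real_inner_self_eq_norm_mul_norm]
      have : ‖(w : V)‖ ≠ 0 := norm_ne_zero_iff.mpr hwV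
      field_simp
  -- ## the inner product table
  have huξ : ⟪u, ξ⟫ = 0 := by rw [real_inner_comm]; exact hξu
  have hvξ : ⟪v, ξ⟫ = 0 := by rw [real_inner_comm]; exact hξv
  have hvu : ⟪v, u⟫ = 0 := by rw [real_inner_comm]; exact huv
  have hφuu : ⟪φ u, u⟫ = 0 := by
    have h := skew u u; rw [real_inner_comm (φ u) u] at h; linarith
  have huφu : ⟪u, φ u⟫ = 0 := by rw [real_inner_comm]; exact hφuu
  have hφvv : ⟪φ v, v⟫ = 0 := by
    have h := skew v v; rw [real_inner_comm (φ v) v] at h; linarith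
  have hvφv : ⟪v, φ v⟫ = 0 := by rw [real_inner_comm]; exact hφvv
  have huφv : ⟪u, φ v⟫ = 0 := by
    have h := skew u v; rw [hφuv] at h; linarith
  have hφvu : ⟪φ v, u⟫ = 0 := by rw [real_inner_comm]; exact huφv
  have hvφu : ⟪v, φ u⟫ = 0 := by rw [real_inner_comm]; exact hφuv
  have hφuφu : ⟪φ u, φ u⟫ = 1 := by rw [hφg, hξu, hu]; ring
  have hφvφv : ⟪φ v, φ v⟫ = 1 := by rw [hφg, hξv, hv]; ring
  have hφuφv : ⟪φ u, φ v⟫ = 0 := by rw [hφg, hξu, huv]; ring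
  have hφvφu : ⟪φ v, φ u⟫ = 0 := by rw [real_inner_comm]; exact hφuφv
  have hξφu : ⟪ξ, φ u⟫ = 0 := hξφ u
  have hξφv : ⟪ξ, φ v⟫ = 0 := hξφ v
  have hφuξ : ⟪φ u, ξ⟫ = 0 := hφξ' u
  have hφvξ : ⟪φ v, ξ⟫ = 0 := hφξ' v
  -- ## the adapted orthonormal basis
  set f : Fin 5 → V := ![u, φ u, v, φ v, ξ] with hf
  have hon : Orthonormal ℝ f := by
    rw [orthonormal_iff_ite]
    intro i j
    fin_cases i <;> fin_cases j <;>
      simp [-inner_self_eq_norm_sq_to_K, hf, hu, hv, huv, hvu, huφu, hφuu, hvφv, hφvv, huφv, hφvu, hvφu, hφuv,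
        hφuφu, hφvφv, hφuφv, hφvφu, hξφu, hξφv, hφuξ, hφvξ, hξu, hξv, huξ, hvξ, hξ]
  have hspan : ⊤ ≤ Submodule.span ℝ (Set.range f) := by
    rw [hon.linearIndependent.span_eq_top_of_card_eq_finrank (by simp [hdim])]
  set b : OrthonormalBasis (Fin 5) ℝ V := OrthonormalBasis.mk hon hspan with hbdef
  have hb : ∀ i, b i = f i := fun i => by
    rw [hbdef, OrthonormalBasis.coe_mk]
  -- ## permutation identities for γ
  have p01 : ∀ x y z : V, γ ![y, x, z] = -γ ![x, y, z] := by
    intro x y z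
    have hc : (![x, y, z] ∘ Equiv.swap (0 : Fin 3) 1) = ![y, x, z] := by
      funext i; fin_cases i <;> simp [Equiv.swap_apply_def]
    have := γ.map_swap (v := ![x, y, z]) (i := 0) (j := 1) (by decide)
    rw [hc] at this
    exact this
  have p12 : ∀ x y z : V, γ ![x, z, y] = -γ ![x, y, z] := by
    intro x y z
    have hc : (![x, y, z] ∘ Equiv.swap (1 : Fin 3) 2) = ![x, z, y] := by
      funext i; fin_cases i <;> simp [Equiv.swap_apply_def]
    have := γ.map_swap (v := ![x, y, z]) (i := 1) (j := 2) (by decide)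
    rw [hc] at this
    exact this
  have p02 : ∀ x y z : V, γ ![z, y, x] = -γ ![x, y, z] := by
    intro x y z
    have hc : (![x, y, z] ∘ Equiv.swap (0 : Fin 3) 2) = ![z, y, x] := by
      funext i; fin_cases i <;> simp [Equiv.swap_apply_def]
    have := γ.map_swap (v := ![x, y, z]) (i := 0) (j := 2) (by decide)
    rw [hc] at this
    exact this
  -- ## vanishing of γ when ξ is plugged in or arguments repeat
  have hg1 : ∀ x z : V, γ ![x, ξ, z] = 0 := by
    intro x z; rw [p01 ξ x z, hγξ, neg_zero]
  have hg2 : ∀ x y : V, γ ![x, y, ξ] = 0 := by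
    intro x y; rw [p02 ξ y x, hγξ, neg_zero]
  have heq01 : ∀ x z : V, γ ![x, x, z] = 0 := fun x z =>
    γ.map_eq_zero_of_eq ![x, x, z] (i := 0) (j := 1) rfl (by decide)
  have heq02 : ∀ x y : V, γ ![x, y, x] = 0 := fun x y =>
    γ.map_eq_zero_of_eq ![x, y, x] (i := 0) (j := 2) rfl (by decide)
  have heq12 : ∀ x y : V, γ ![x, y, y] = 0 := fun x y =>
    γ.map_eq_zero_of_eq ![x, y, y] (i := 1) (j := 2) rfl (by decide)
  -- ## values of γ on permutations of the basis triples
  have mA1 : γ ![u, v, (φ u)] = -γ ![u, (φ u), v] := p12 u (φ u) v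
  have mA2 : γ ![(φ u), u, v] = -γ ![u, (φ u), v] := p01 u (φ u) v
  have mA3 : γ ![(φ u), v, u] = γ ![u, (φ u), v] := by
    have h1 := p01 v (φ u) u; have h2 := p02 u (φ u) v; linarith
  have mA4 : γ ![v, u, (φ u)] = γ ![u, (φ u), v] := by
    have h1 := p02 (φ u) u v; have h2 := p01 u (φ u) v; linarith
  have mA5 : γ ![v, (φ u), u] = -γ ![u, (φ u), v] := p02 u (φ u) v
  have mB1 : γ ![u, (φ v), (φ u)] = -γ ![u, (φ u), (φ v)] := p12 u (φ u) (φ v)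
  have mB2 : γ ![(φ u), u, (φ v)] = -γ ![u, (φ u), (φ v)] := p01 u (φ u) (φ v)
  have mB3 : γ ![(φ u), (φ v), u] = γ ![u, (φ u), (φ v)] := by
    have h1 := p01 (φ v) (φ u) u; have h2 := p02 u (φ u) (φ v); linarith
  have mB4 : γ ![(φ v), u, (φ u)] = γ ![u, (φ u), (φ v)] := by
    have h1 := p02 (φ u) u (φ v); have h2 := p01 u (φ u) (φ v); linarith
  have mB5 : γ ![(φ v), (φ u), u] = -γ ![u, (φ u), (φ v)] := p02 u (φ u) (φ v)
  have mC1 : γ ![u, (φ v), v] = -γ ![u, v, (φ v)] := p12 u v (φ v)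
  have mC2 : γ ![v, u, (φ v)] = -γ ![u, v, (φ v)] := p01 u v (φ v)
  have mC3 : γ ![v, (φ v), u] = γ ![u, v, (φ v)] := by
    have h1 := p01 (φ v) v u; have h2 := p02 u v (φ v); linarith
  have mC4 : γ ![(φ v), u, v] = γ ![u, v, (φ v)] := by
    have h1 := p02 v u (φ v); have h2 := p01 u v (φ v); linarith
  have mC5 : γ ![(φ v), v, u] = -γ ![u, v, (φ v)] := p02 u v (φ v)
  have mD1 : γ ![(φ u), (φ v), v] = -γ ![(φ u), v, (φ v)] := p12 (φ u) v (φ v)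
  have mD2 : γ ![v, (φ u), (φ v)] = -γ ![(φ u), v, (φ v)] := p01 (φ u) v (φ v)
  have mD3 : γ ![v, (φ v), (φ u)] = γ ![(φ u), v, (φ v)] := by
    have h1 := p01 (φ v) v (φ u); have h2 := p02 (φ u) v (φ v); linarith
  have mD4 : γ ![(φ v), (φ u), v] = γ ![(φ u), v, (φ v)] := by
    have h1 := p02 v (φ u) (φ v); have h2 := p01 (φ u) v (φ v); linarith
  have mD5 : γ ![(φ v), v, (φ u)] = -γ ![(φ u), v, (φ v)] := p02 (φ u) v (φ v)
  -- ## the Lee-form sum over an arbitrary orthonormal basis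
  have hsum : ∀ W : V,
      ∑ i, γ ![W, e i, φ (e i)] = 2 * (γ ![W, u, φ u] + γ ![W, v, φ v]) := by
    intro W
    have hexp : ∀ (x : V) (r : Fin 5 → ℝ), (∑ j, r j • b j) = x →
        bil γ W x (φ x) = ∑ j, ∑ k, r j * (r k * (bil γ W (b j) (φ (b k)))) := by
      intro x r hr
      rw [← hr]
      simp only [map_sum, map_smul, LinearMap.sum_apply, LinearMap.smul_apply,
        smul_eq_mul, Finset.mul_sum]
      conv_lhs => rw [Finset.sum_comm]
      exact Finset.sum_congr rfl fun j _ => Finset.sum_congr rfl fun k _ => by ring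
    have h1 : ∀ i, γ ![W, e i, φ (e i)]
        = ∑ j, ∑ k, ⟪b j, e i⟫ * (⟪b k, e i⟫ * (bil γ W (b j) (φ (b k)))) := by
      intro i
      have h0 : γ ![W, e i, φ (e i)] = bil γ W (e i) (φ (e i)) :=
        (bil_apply γ W (e i) (φ (e i))).symm
      rw [h0]
      exact hexp (e i) (fun j => ⟪b j, e i⟫) (b.sum_repr' (e i))
    calc ∑ i, γ ![W, e i, φ (e i)]
        = ∑ i, ∑ j, ∑ k, ⟪b j, e i⟫ * (⟪b k, e i⟫ * (bil γ W (b j) (φ (b k)))) :=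
          Finset.sum_congr rfl fun i _ => h1 i
      _ = ∑ j, ∑ k, (∑ i, ⟪b j, e i⟫ * ⟪b k, e i⟫) * (bil γ W (b j) (φ (b k))) := by
          rw [Finset.sum_comm]
          refine Finset.sum_congr rfl fun j _ => ?_
          rw [Finset.sum_comm]
          refine Finset.sum_congr rfl fun k _ => ?_
          rw [Finset.sum_mul]
          exact Finset.sum_congr rfl fun i _ => by ring
      _ = ∑ j, ∑ k, ⟪b j, b k⟫ * (bil γ W (b j) (φ (b k))) := by
          refine Finset.sum_congr rfl fun j _ => Finset.sum_congr rfl fun k _ => ?_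
          congr 1
          have hcomm : ∀ i, ⟪b k, e i⟫ = ⟪e i, b k⟫ := fun i => real_inner_comm _ _
          simp_rw [hcomm]
          exact e.sum_inner_mul_inner _ _
      _ = ∑ j, bil γ W (b j) (φ (b j)) := by
          refine Finset.sum_congr rfl fun j _ => ?_
          have hdelta : ∀ k, ⟪b j, b k⟫ = if j = k then (1 : ℝ) else 0 := fun k =>
            orthonormal_iff_ite.mp b.orthonormal j k
          simp [hdelta, ite_mul]
      _ = 2 * (γ ![W, u, φ u] + γ ![W, v, φ v]) := by
          rw [Fin.sum_univ_five]
          have r1 : γ ![W, φ u, u] = -γ ![W, u, φ u] := p12 W u (φ u)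
          have r2 : γ ![W, φ v, v] = -γ ![W, v, φ v] := p12 W v (φ v)
          have e0 : bil γ W (b 0) (φ (b 0)) = γ ![W, u, φ u] := by
            rw [hb 0]; simp [hf]
          have e1 : bil γ W (b 1) (φ (b 1)) = γ ![W, u, φ u] := by
            rw [hb 1]
            simp only [hf, Matrix.cons_val_one, Matrix.cons_val_zero, Matrix.head_cons, bil_apply]
            rw [hφ2 u, hξu]
            have : γ ![W, φ u, -u + (0 : ℝ) • ξ] = γ ![W, φ u, -u] := by norm_num
            rw [this, show (-u : V) = (-1 : ℝ) • u by simp, g_smul2, r1]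
            ring
          have e2 : bil γ W (b 2) (φ (b 2)) = γ ![W, v, φ v] := by
            rw [hb 2]; simp [hf]
          have e3 : bil γ W (b 3) (φ (b 3)) = γ ![W, v, φ v] := by
            rw [hb 3]
            simp only [hf, bil_apply]
            norm_num
            simp only [Matrix.cons_val]
            rw [hφ2 v, hξv]
            have : γ ![W, φ v, -v + (0 : ℝ) • ξ] = γ ![W, φ v, -v] := by norm_num
            rw [this, show (-v : V) = (-1 : ℝ) • v by simp, g_smul2, r2]
            ring
          have e4 : bil γ W (b 4) (φ (b 4)) = 0 := by
            rw [hb 4]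
            simp only [hf, bil_apply]
            norm_num
            simp only [Matrix.cons_val]
            rw [hφξ, show (0 : V) = (0 : ℝ) • ξ by simp, g_smul2]
            ring
          rw [e0, e1, e2, e3, e4]
          ring
  -- ## the key identity as vanishing of a trilinear map
  have hT : Tmap γ φ u v = 0 := by
    refine b.toBasis.ext fun i => b.toBasis.ext fun j => b.toBasis.ext fun k => ?_
    simp only [OrthonormalBasis.coe_toBasis, LinearMap.zero_apply]
    rw [hb i, hb j, hb k]
    fin_cases i <;> fin_cases j <;> fin_cases k <;>
      · simp only [hf, Matrix.cons_val_zero, Matrix.cons_val_one, Matrix.head_cons,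
          Matrix.cons_val_two, Matrix.tail_cons, Matrix.cons_val_three,
          Matrix.cons_val_four, Tmap_apply]
        simp [-inner_self_eq_norm_sq_to_K, hφ2, hφξ, hξu, hξv, hγξ, hg1, hg2, heq01, heq02, heq12,
          mA1, mA2, mA3, mA4, mA5, mB1, mB2, mB3, mB4, mB5,
          mC1, mC2, mC3, mC4, mC5, mD1, mD2, mD3, mD4, mD5,
          inner_add_left, inner_add_right, inner_neg_left, inner_neg_right,
          real_inner_smul_left, real_inner_smul_right,
          hu, hv, huv, hvu, huφu, hφuu, hvφv, hφvv, huφv, hφvu, hvφu, hφuv,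
          hφuφu, hφvφv, hφuφv, hφvφu, hξφu, hξφv, hφuξ, hφvξ, hξu, hξv, huξ, hvξ, hξ]
        try ring
  -- ## conclusion
  intro X Y Z
  have hk := LinearMap.congr_fun (LinearMap.congr_fun (LinearMap.congr_fun hT X) Y) Z
  rw [Tmap_apply] at hk
  simp only [LinearMap.zero_apply] at hk
  rw [hsum X, hsum Y, hsum Z]
  linear_combination hk
end

section
/- Let (ξ, η, φ) be an almost contact metric structure on the n-dimensional real inner product space (V, ⟨·,·⟩) with fundamental 2-form F, let t > 0, and let ⟨·,·⟩~ = t⟨·,·⟩ + (1−t)η⊗η be the transversally rescaled inner product. Let γ be an alternating 3-form on V with ι_ξγ = 0 and let λ be a linear functional on V with λ(ξ) = 0. Then for every ⟨·,·⟩~-orthonormal basis (ẽ_1, …, ẽ_n), every ⟨·,·⟩-orthonormal basis (e_1, …, e_n), and every X ∈ V: ½ Σ_{i=1}^{n} (t·γ + t·λ∧F)(X, ẽ_i, φ(ẽ_i)) = ½ Σ_{i=1}^{n} γ(X, e_i, φ(e_i)) + ((n−3)/2)·λ(X). (Taking γ = dF and λ = 2df, this is the transformation rule ϑ̃ = ϑ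 + (n−3)df for the Lee 1-form under a transversal conformal transformation by the basic function f.) -/
open RealInnerProductSpace

section Helpers

variable {V : Type*} [NormedAddCommGroup V] [InnerProductSpace ℝ V]

lemma upd1 (X Y Z W : V) : Function.update ![X, Y, Z] (1 : Fin 3) W = ![X, W, Z] := by
  funext i; fin_cases i <;> simp

lemma upd2 (X Y Z W : V) : Function.update ![X, Y, Z] (2 : Fin 3) W = ![X, Y, W] := by
  funext i; fin_cases i <;> simp

lemma g_add1 (γ : V [⋀^Fin 3]→ₗ[ℝ] ℝ) (X Y Y' Z : V) :
    γ ![X, Y + Y', Z] = γ ![X, Y, Z] + γ ![X, Y', Z] := by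
  have h := γ.map_update_add ![X, Y, Z] 1 Y Y'
  simpa [upd1] using h

lemma g_smul1 (γ : V [⋀^Fin 3]→ₗ[ℝ] ℝ) (c : ℝ) (X Y Z : V) :
    γ ![X, c • Y, Z] = c * γ ![X, Y, Z] := by
  have h := γ.map_update_smul ![X, Y, Z] 1 c Y
  simpa [upd1, smul_eq_mul] using h

lemma g_add2 (γ : V [⋀^Fin 3]→ₗ[ℝ] ℝ) (X Y Z Z' : V) :
    γ ![X, Y, Z + Z'] = γ ![X, Y, Z] + γ ![X, Y, Z'] := by
  have h := γ.map_update_add ![X, Y, Z] 2 Z Z'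
  simpa [upd2] using h

lemma g_smul2 (γ : V [⋀^Fin 3]→ₗ[ℝ] ℝ) (c : ℝ) (X Y Z : V) :
    γ ![X, Y, c • Z] = c * γ ![X, Y, Z] := by
  have h := γ.map_update_smul ![X, Y, Z] 2 c Z
  simpa [upd2, smul_eq_mul] using h

/-- slot-2 linear map -/
def sl2 (γ : V [⋀^Fin 3]→ₗ[ℝ] ℝ) (X Z : V) : V →ₗ[ℝ] ℝ where
  toFun Y := γ ![X, Y, Z]
  map_add' a b := g_add1 γ X a b Z
  map_smul' c a := g_smul1 γ c X a Z

/-- slot-3 linear map -/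
def sl3 (γ : V [⋀^Fin 3]→ₗ[ℝ] ℝ) (X Y : V) : V →ₗ[ℝ] ℝ where
  toFun Z := γ ![X, Y, Z]
  map_add' a b := g_add2 γ X Y a b
  map_smul' c a := g_smul2 γ c X Y a

lemma trace_indep {n : ℕ} (b c : OrthonormalBasis (Fin n) ℝ V)
    (γ : V [⋀^Fin 3]→ₗ[ℝ] ℝ) (φ : V →ₗ[ℝ] V) (X : V) :
    ∑ i, γ ![X, c i, φ (c i)] = ∑ i, γ ![X, b i, φ (b i)] := by
  have hbo := orthonormal_iff_ite.mp b.orthonormal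
  have step1 : ∀ i, γ ![X, c i, φ (c i)]
      = ∑ k, ⟪b k, c i⟫ * γ ![X, c i, φ (b k)] := by
    intro i
    have h1 : φ (c i) = ∑ k, ⟪b k, c i⟫ • φ (b k) := by
      conv_lhs => rw [← b.sum_repr' (c i)]
      rw [map_sum]
      simp [map_smul]
    calc γ ![X, c i, φ (c i)] = sl3 γ X (c i) (φ (c i)) := rfl
      _ = ∑ k, ⟪b k, c i⟫ * γ ![X, c i, φ (b k)] := by
          rw [h1, map_sum]
          refine Finset.sum_congr rfl fun k _ => ?_
          simp [sl3, g_smul2]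
  have step2 : ∀ i k, γ ![X, c i, φ (b k)]
      = ∑ j, ⟪b j, c i⟫ * γ ![X, b j, φ (b k)] := by
    intro i k
    calc γ ![X, c i, φ (b k)] = sl2 γ X (φ (b k)) (c i) := rfl
      _ = _ := by
          conv_lhs => rw [← b.sum_repr' (c i)]
          rw [map_sum]
          refine Finset.sum_congr rfl fun j _ => ?_
          simp [sl2, g_smul1]
  calc ∑ i, γ ![X, c i, φ (c i)]
      = ∑ i, ∑ k, ∑ j, ⟪b k, c i⟫ * (⟪b j, c i⟫ * γ ![X, b j, φ (b k)]) := by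
        refine Finset.sum_congr rfl fun i _ => ?_
        rw [step1]
        refine Finset.sum_congr rfl fun k _ => ?_
        rw [step2, Finset.mul_sum]
    _ = ∑ k, ∑ j, (∑ i, ⟪b k, c i⟫ * ⟪c i, b j⟫) * γ ![X, b j, φ (b k)] := by
        rw [Finset.sum_comm]
        refine Finset.sum_congr rfl fun k _ => ?_
        rw [Finset.sum_comm]
        refine Finset.sum_congr rfl fun j _ => ?_
        rw [Finset.sum_mul]
        refine Finset.sum_congr rfl fun i _ => ?_
        rw [real_inner_comm (b j) (c i)]; ring
    _ = ∑ k, ∑ j, (if k = j then (1:ℝ) else 0) * γ ![X, b j, φ (b k)] := by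
        refine Finset.sum_congr rfl fun k _ => Finset.sum_congr rfl fun j _ => ?_
        rw [c.sum_inner_mul_inner, hbo]
    _ = ∑ k, γ ![X, b k, φ (b k)] := by
        refine Finset.sum_congr rfl fun k _ => ?_
        simp [ite_mul]

end Helpers

/-- Transformation rule for the Lee form under a transversal conformal
transformation: with `g̃ = t·g + (1−t)η⊗η`, a horizontal 3-form `γ` and a
horizontal functional `λ`, for any `g̃`-orthonormal basis `ẽ` and any
`g`-orthonormal basis `e`,
`½ Σᵢ (t·γ + t·λ∧F)(X, ẽᵢ, φẽᵢ) = ½ Σᵢ γ(X, eᵢ, φeᵢ) + ((n−3)/2)·λ(X)`. -/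
theorem stmt_12 {V : Type*} [NormedAddCommGroup V] [InnerProductSpace ℝ V]
    [FiniteDimensional ℝ V]
    (ξ : V) (φ : V →ₗ[ℝ] V)
    (hξ : ⟪ξ, ξ⟫ = 1) (hφξ : φ ξ = 0)
    (hφ2 : ∀ X : V, φ (φ X) = -X + ⟪ξ, X⟫ • ξ)
    (hφg : ∀ X Y : V, ⟪φ X, φ Y⟫ = ⟪X, Y⟫ - ⟪ξ, X⟫ * ⟪ξ, Y⟫)
    (t : ℝ) (ht : 0 < t)
    (γ : V [⋀^Fin 3]→ₗ[ℝ] ℝ) (hγξ : ∀ Y Z : V, γ ![ξ, Y, Z] = 0)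
    (l : V →ₗ[ℝ] ℝ) (hlξ : l ξ = 0)
    (n : ℕ) (hn : Module.finrank ℝ V = n)
    (et : Module.Basis (Fin n) ℝ V)
    (het : ∀ i j, t * ⟪et i, et j⟫ + (1 - t) * (⟪ξ, et i⟫ * ⟪ξ, et j⟫)
      = if i = j then 1 else 0)
    (e : OrthonormalBasis (Fin n) ℝ V) :
    ∀ X : V,
      (1 / 2 : ℝ) * ∑ i,
        (t * γ ![X, et i, φ (et i)]
          + t * (l X * ⟪φ (et i), φ (et i)⟫ - l (et i) * ⟪φ X, φ (et i)⟫
              + l (φ (et i)) * ⟪φ X, et i⟫))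
      = (1 / 2 : ℝ) * ∑ i, γ ![X, e i, φ (e i)] + (((n : ℝ) - 3) / 2) * l X := by
  intro X
  -- trivial case n = 0
  rcases Nat.eq_zero_or_pos n with h0 | hpos
  · subst h0
    haveI : Subsingleton V := Module.finrank_zero_iff.mp hn
    have hX : X = 0 := Subsingleton.elim _ _
    simp [hX]
  haveI : Nonempty (Fin n) := ⟨⟨0, hpos⟩⟩
  -- η ∘ φ = 0
  have hηφ2 : ∀ Y : V, ⟪ξ, φ (φ Y)⟫ = 0 := by
    intro Y
    rw [hφ2]
    simp [inner_add_right, inner_smul_right, hξ, -inner_self_eq_norm_sq_to_K]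
  have hηφ : ∀ Y : V, ⟪ξ, φ Y⟫ = 0 := by
    intro Y
    have h3 : φ (φ (φ Y)) = -(φ Y) := by
      rw [hφ2 Y]
      simp [hφξ]
    have := hηφ2 (φ Y)
    rw [h3] at this
    simpa using this
  have hφXξ : ∀ Y : V, ⟪φ Y, ξ⟫ = 0 := fun Y => by
    rw [real_inner_comm]; exact hηφ Y
  -- the square root
  set s := Real.sqrt t with hsdef
  have hss : s * s = t := Real.mul_self_sqrt ht.le
  have hs0 : s ≠ 0 := by positivity
  -- the rescaled orthonormal family
  set f : Fin n → V := fun i => s • et i + ((1 - s) * ⟪ξ, et i⟫) • ξ with hfdef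
  have horth : Orthonormal ℝ f := by
    rw [orthonormal_iff_ite]
    intro i j
    have h := het i j
    have hij : ⟪f i, f j⟫ = s * s * ⟪et i, et j⟫
        + (1 - s * s) * (⟪ξ, et i⟫ * ⟪ξ, et j⟫) := by
      simp only [hfdef, inner_add_left, inner_add_right, inner_smul_left,
        inner_smul_right, hξ, RCLike.star_def, conj_trivial]
      rw [real_inner_comm (et i) ξ]
      ring
    rw [hij, hss]
    linarith [h]
  have hcard : Fintype.card (Fin n) = Module.finrank ℝ V := by simp [hn]
  set bb : Module.Basis (Fin n) ℝ V := basisOfOrthonormalOfCardEqFinrank horth hcard with hbbdef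
  have hbb : ⇑bb = f := coe_basisOfOrthonormalOfCardEqFinrank horth hcard
  have horth' : Orthonormal ℝ bb := by rw [hbb]; exact horth
  set b : OrthonormalBasis (Fin n) ℝ V := bb.toOrthonormalBasis horth' with hbdef
  have hb : ∀ i, b i = f i := by
    intro i
    have := bb.coe_toOrthonormalBasis horth'
    rw [show ⇑(bb.toOrthonormalBasis horth') = ⇑bb from this, hbb]
  -- pointwise facts about b i
  have hφb : ∀ i, φ (b i) = s • φ (et i) := by
    intro i; rw [hb]
    simp [hfdef, map_add, map_smul, hφξ]
  have hηb : ∀ i, ⟪ξ, b i⟫ = ⟪ξ, et i⟫ := by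
    intro i; rw [hb]
    simp [hfdef, inner_add_right, inner_smul_right, hξ, -inner_self_eq_norm_sq_to_K]
    ring
  have hlb : ∀ i, l (b i) = s * l (et i) := by
    intro i; rw [hb]
    simp [hfdef, hlξ]
  have hlφb : ∀ i, l (φ (b i)) = s * l (φ (et i)) := by
    intro i; rw [hφb]; simp
  have hγb : ∀ i, γ ![X, b i, φ (b i)] = t * γ ![X, et i, φ (et i)] := by
    intro i
    rw [hφb, hb]
    have hγξ2 : ∀ Z : V, γ ![X, ξ, Z] = 0 := by
      intro Z
      have hswap : ![X, ξ, Z] = ![ξ, X, Z] ∘ Equiv.swap (0 : Fin 3) 1 := by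
        funext k; fin_cases k <;> simp [Equiv.swap_apply_of_ne_of_ne]
      rw [hswap, γ.map_swap _ (by decide : (0 : Fin 3) ≠ 1), hγξ]
      simp
    simp only [hfdef]
    rw [g_smul2, g_add1, g_smul1, g_smul1, hγξ2]
    rw [← hss]; ring
  have hφbX : ∀ i, ⟪φ X, φ (b i)⟫ = s * ⟪φ X, φ (et i)⟫ := by
    intro i; rw [hφb]; simp [inner_smul_right]
  have hφXb : ∀ i, ⟪φ X, b i⟫ = s * ⟪φ X, et i⟫ := by
    intro i; rw [hb]
    simp [hfdef, inner_add_right, inner_smul_right, hφXξ]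
  have hinner1 : ∀ i, t * ⟪φ (et i), φ (et i)⟫ = 1 - ⟪ξ, b i⟫ * ⟪ξ, b i⟫ := by
    intro i
    have h := het i i
    simp [-inner_self_eq_norm_sq_to_K] at h
    rw [hφg, hηb]
    nlinarith [h]
  -- per-index rewriting of the summand
  have hsummand : ∀ i,
      t * γ ![X, et i, φ (et i)]
        + t * (l X * ⟪φ (et i), φ (et i)⟫ - l (et i) * ⟪φ X, φ (et i)⟫
            + l (φ (et i)) * ⟪φ X, et i⟫)
      = γ ![X, b i, φ (b i)]
        + (l X * (1 - ⟪ξ, b i⟫ * ⟪ξ, b i⟫) - l (b i) * ⟪φ X, φ (b i)⟫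
            + l (φ (b i)) * ⟪φ X, b i⟫) := by
    intro i
    rw [hγb, hlb, hφbX, hlφb, hφXb, ← hinner1]
    ring_nf
    rw [← hss]
    ring
  -- global sums
  have hsum1 : ∑ i, ⟪ξ, b i⟫ * ⟪ξ, b i⟫ = 1 := by
    have := b.sum_inner_mul_inner ξ ξ
    rw [hξ] at this
    rw [← this]
    exact Finset.sum_congr rfl fun i _ => by rw [real_inner_comm (b i) ξ]
  have hrepr : ∀ (Y : V), l Y = ∑ i, ⟪b i, Y⟫ * l (b i) := by
    intro Y
    conv_lhs => rw [← b.sum_repr' Y]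
    rw [map_sum]
    exact Finset.sum_congr rfl fun i _ => by simp
  have hsum2 : ∑ i, l (b i) * ⟪φ X, φ (b i)⟫ = l X := by
    have : ∀ i, l (b i) * ⟪φ X, φ (b i)⟫
        = ⟪b i, X⟫ * l (b i) - ⟪ξ, X⟫ * (⟪b i, ξ⟫ * l (b i)) := by
      intro i
      rw [hφg]
      rw [real_inner_comm X (b i), real_inner_comm ξ (b i)]
      ring
    rw [Finset.sum_congr rfl fun i _ => this i, Finset.sum_sub_distrib,
      ← hrepr X, ← Finset.mul_sum, ← hrepr ξ, hlξ]
    ring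
  have hsum3 : ∑ i, l (φ (b i)) * ⟪φ X, b i⟫ = -l X := by
    have hX2 : l (φ (φ X)) = -l X := by
      rw [hφ2]
      simp [hlξ]
    have hrepr2 : φ (φ X) = ∑ i, ⟪b i, φ X⟫ • φ (b i) := by
      conv_lhs => rw [← b.sum_repr' (φ X)]
      rw [map_sum]
      simp [map_smul]
    rw [← hX2, hrepr2, map_sum]
    exact Finset.sum_congr rfl fun i _ => by
      rw [real_inner_comm (φ X) (b i)]; simp [mul_comm]
  have htrace := trace_indep b e γ φ X
  -- put it together
  rw [Finset.sum_congr rfl fun i _ => hsummand i]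
  rw [Finset.sum_add_distrib]
  have hexp : ∑ i, (l X * (1 - ⟪ξ, b i⟫ * ⟪ξ, b i⟫) - l (b i) * ⟪φ X, φ (b i)⟫
      + l (φ (b i)) * ⟪φ X, b i⟫)
      = l X * ((n : ℝ) - 1) - l X + (- l X) := by
    rw [Finset.sum_add_distrib, Finset.sum_sub_distrib, hsum2, hsum3, ← Finset.mul_sum]
    congr 2
    rw [Finset.sum_sub_distrib, hsum1]
    simp
  rw [hexp, ← htrace]
  ring
end

section
/- Let (ξ, η, φ) be an almost contact metric structure on the finite-dimensional real inner product space (V, ⟨·,·⟩), and let s, t ∈ ℝ with s² + t² = 1. On Ŵ = ℝ² ⊕ V with the inner product ⟨(a,b,X),(a',b',X')⟩_Ŵ = aa' + bb' + ⟨X,X'⟩, set ξ̂ = (t, s, 0), ξ̂⊥ = (−s, t, 0), η̂(w) = ⟨ξ̂, w⟩_Ŵ, η̂⊥(w) = ⟨ξ̂⊥, w⟩_Ŵ, and define φ̂(a,b,X) = η̂⊥(a,b,X)·(0,0,ξ) − η(X)·ξ̂⊥ + (0,0,φ(X)). Then (ξ̂, η̂, φ̂) is an almost contact metric structure on (Ŵ,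 ⟨·,·⟩_Ŵ): φ̂(ξ̂) = 0, φ̂∘φ̂ = −id + η̂(·)ξ̂, and ⟨φ̂(w), φ̂(w')⟩_Ŵ = ⟨w, w'⟩_Ŵ − η̂(w)η̂(w') for all w, w' ∈ Ŵ. (This is the pointwise core of the proposition constructing a family of Sasaki-with-torsion structures on a two-torus bundle over a normal almost contact metric manifold.) -/
open RealInnerProductSpace

/-- The almost contact endomorphism `φ̂` on `Ŵ = ℝ² ⊕ V` used in the torus-bundle
construction of ST structures:
`φ̂(a,b,X) = η̂⊥(a,b,X)·(0,0,ξ) − η(X)·ξ̂⊥ + (0,0,φX)`. -/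
noncomputable def phiHat {V : Type*} [NormedAddCommGroup V] [InnerProductSpace ℝ V]
    (ξ : V) (φ : V →ₗ[ℝ] V) (s t : ℝ) : ℝ × ℝ × V → ℝ × ℝ × V :=
  fun w => (-s * w.1 + t * w.2.1) • ((0 : ℝ), (0 : ℝ), ξ)
    - ⟪ξ, w.2.2⟫ • (-s, t, (0 : V)) + ((0 : ℝ), (0 : ℝ), φ w.2.2)

lemma phiHat_eq {V : Type*} [NormedAddCommGroup V] [InnerProductSpace ℝ V]
    (ξ : V) (φ : V →ₗ[ℝ] V) (s t : ℝ) (w : ℝ × ℝ × V) :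
    phiHat ξ φ s t w
      = (s * ⟪ξ, w.2.2⟫, -t * ⟪ξ, w.2.2⟫, (-s * w.1 + t * w.2.1) • ξ + φ w.2.2) := by
  simp [phiHat, Prod.ext_iff]
  constructor <;> ring

/-- Pointwise core of the torus-bundle construction: with `s² + t² = 1`, the
triple `(ξ̂, η̂, φ̂)`, where `ξ̂ = (t,s,0)` and `η̂ = ⟨ξ̂, ·⟩_Ŵ`, is an almost
contact metric structure on `Ŵ = ℝ² ⊕ V` with the product inner product
`⟨(a,b,X),(a',b',X')⟩_Ŵ = aa' + bb' + ⟨X,X'⟩`. -/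
theorem stmt_17 {V : Type*} [NormedAddCommGroup V] [InnerProductSpace ℝ V]
    [FiniteDimensional ℝ V]
    (ξ : V) (φ : V →ₗ[ℝ] V)
    (hξ : ⟪ξ, ξ⟫ = 1) (hφξ : φ ξ = 0)
    (hφ2 : ∀ X : V, φ (φ X) = -X + ⟪ξ, X⟫ • ξ)
    (hφg : ∀ X Y : V, ⟪φ X, φ Y⟫ = ⟪X, Y⟫ - ⟪ξ, X⟫ * ⟪ξ, Y⟫)
    (s t : ℝ) (hst : s ^ 2 + t ^ 2 = 1) :
    (t * t + s * s + ⟪(0 : V), (0 : V)⟫ = 1) ∧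
    phiHat ξ φ s t (t, s, (0 : V)) = 0 ∧
    (∀ w : ℝ × ℝ × V,
      phiHat ξ φ s t (phiHat ξ φ s t w)
        = -w + (t * w.1 + s * w.2.1) • ((t, s, (0 : V)) : ℝ × ℝ × V)) ∧
    (∀ w w' : ℝ × ℝ × V,
      (phiHat ξ φ s t w).1 * (phiHat ξ φ s t w').1
          + (phiHat ξ φ s t w).2.1 * (phiHat ξ φ s t w').2.1
          + ⟪(phiHat ξ φ s t w).2.2, (phiHat ξ φ s t w').2.2⟫
        = (w.1 * w'.1 + w.2.1 * w'.2.1 + ⟪w.2.2, w'.2.2⟫)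
          - (t * w.1 + s * w.2.1) * (t * w'.1 + s * w'.2.1)) := by
  -- η ∘ φ = 0
  have hφξ' : ∀ X : V, ⟪ξ, φ X⟫ = 0 := by
    intro X
    have h1 := hφg (φ X) (φ X)
    rw [hφ2 X, hφg X X] at h1
    simp only [inner_add_left, inner_add_right, inner_neg_neg, inner_neg_left,
      inner_neg_right, real_inner_smul_left, real_inner_smul_right, hξ] at h1
    have h2 : ⟪ξ, X⟫ = ⟪X, ξ⟫ := real_inner_comm _ _
    have h3 : ⟪ξ, φ X⟫ ^ 2 = 0 := by linear_combination h1 - ⟪ξ, X⟫ * h2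
    exact pow_eq_zero_iff (by norm_num) |>.mp h3
  have hφξ'' : ∀ X : V, ⟪φ X, ξ⟫ = 0 := fun X => by
    rw [real_inner_comm]; exact hφξ' X
  refine ⟨by rw [inner_zero_left]; linear_combination hst, ?_, ?_, ?_⟩
  · rw [phiHat_eq]
    simp only [inner_zero_right, map_zero, mul_zero, neg_zero, add_zero]
    rw [show -s * t + t * s = 0 by ring]
    simp [Prod.ext_iff]
  · rintro ⟨a, b, X⟩
    rw [phiHat_eq, phiHat_eq]
    simp only [inner_add_right, real_inner_smul_right, hξ, hφξ', map_add, map_smul,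
      hφξ, hφ2]
    refine Prod.ext ?_ (Prod.ext ?_ ?_) <;>
      simp only [Prod.fst_add, Prod.snd_add, Prod.fst_neg, Prod.snd_neg,
        Prod.smul_fst, Prod.smul_snd, smul_eq_mul]
    · linear_combination (-a) * hst
    · linear_combination (-b) * hst
    · rw [show (-s * (s * ⟪ξ, X⟫) + t * (-t * ⟪ξ, X⟫)) = -⟪ξ, X⟫ from by
        linear_combination (-⟪ξ, X⟫) * hst]
      module
  · intro w w'
    simp only [phiHat_eq]
    simp only [inner_add_left, inner_add_right, real_inner_smul_left,
      real_inner_smul_right, hξ, hφξ', hφξ'', hφg]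
    linear_combination (⟪ξ, w.2.2⟫ * ⟪ξ, w'.2.2⟫ + w.1 * w'.1 + w.2.1 * w'.2.1) * hst
end
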